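/- arXiv:1002.2731 — 2 statements merged into one kernel-verified Lean document; each statement's English description precedes it below -/
import Mathlib

section
/- Let c ≥ 1 be a real number and define f : {0,1,2,...} → ℝ by f(m) = (1 - 2^{-m})(c - m). If m* is the largest nonnegative integer at which f attains its maximum, then log₂ c - 2 < m* ≤ log₂ c + 1. -/
open Filter Topology Set

theorem maximizer_estimate (c : ℝ) (hc : 1 ≤ c) (mstar : ℕ)
    (hmax : ∀ m : ℕ, (1 - (1/2 : ℝ)^m) * (c - m) ≤ (1 - (1/2 : ℝ)^mstar) * (c - mstar))
    (hlargest : ∀ m : ℕ,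
      (1 - (1/2 : ℝ)^m) * (c - m) = (1 - (1/2 : ℝ)^mstar) * (c - mstar) → m ≤ mstar) :
    Real.logb 2 c - 2 < mstar ∧ (mstar : ℝ) ≤ Real.logb 2 c + 1 := by
  have hap : (0:ℝ) < 2 ^ mstar := by positivity
  have ha1 : (1:ℝ) ≤ 2 ^ mstar := one_le_pow₀ (by norm_num)
  have hne : (2:ℝ) ^ mstar ≠ 0 := ne_of_gt hap
  have hm : (mstar:ℝ) ≤ 2 ^ mstar := by
    exact_mod_cast (Nat.lt_two_pow_self (n := mstar)).le
  -- strict decrease after mstar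
  have h1 : (1 - (1/2:ℝ)^(mstar+1)) * (c - (mstar+1)) < (1 - (1/2:ℝ)^mstar) * (c - mstar) := by
    rcases lt_or_eq_of_le (hmax (mstar+1)) with h | h
    · push_cast at h; exact h
    · exact absurd (hlargest _ h) (by omega)
  have key1 : c + 1 - mstar < 2 * 2 ^ mstar := by
    have h1' := mul_lt_mul_of_pos_right h1 (show (0:ℝ) < 2 * 2 ^ mstar by positivity)
    have e1 : (1 - (1/2:ℝ)^(mstar+1)) * (c - (mstar+1)) * (2 * 2 ^ mstar)
        = (2 * 2 ^ mstar - 1) * (c - mstar - 1) := by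
      rw [pow_succ, div_pow, one_pow]; field_simp; ring
    have e2 : (1 - (1/2:ℝ)^mstar) * (c - mstar) * (2 * 2 ^ mstar)
        = (2 * 2 ^ mstar - 2) * (c - mstar) := by
      rw [div_pow, one_pow]; field_simp
    rw [e1, e2] at h1'
    nlinarith [h1']
  have hclt : c < 2 ^ (mstar + 2) := by
    have : (2:ℝ) ^ (mstar + 2) = 4 * 2 ^ mstar := by ring
    rw [this]; nlinarith
  have hcle : (2:ℝ) ^ mstar ≤ 2 * c := by
    rcases Nat.eq_zero_or_pos mstar with h0 | hpos
    · rw [h0]; norm_num; linarith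
    · obtain ⟨k, rfl⟩ : ∃ k, mstar = k + 1 := ⟨mstar - 1, by omega⟩
      have h2 := hmax k
      have hkp : (0:ℝ) < 2 ^ k := by positivity
      have hk1 : (1:ℝ) ≤ 2 ^ k := one_le_pow₀ (by norm_num)
      have hk0 : (0:ℝ) ≤ (k:ℝ) := Nat.cast_nonneg k
      have h2' := mul_le_mul_of_nonneg_right h2 (show (0:ℝ) ≤ 2 * 2 ^ k by positivity)
      have e1 : (1 - (1/2:ℝ)^k) * (c - k) * (2 * 2 ^ k)
          = (2 * 2 ^ k - 2) * (c - k) := by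
        rw [div_pow, one_pow]; field_simp
      have e2 : (1 - (1/2:ℝ)^(k+1)) * (c - ((k:ℕ):ℝ)) * (2 * 2 ^ k)
          = (2 * 2 ^ k - 1) * (c - k) := by
        rw [pow_succ, div_pow, one_pow]; field_simp
      push_cast at h2'
      have e3 : (1 - (1/2:ℝ)^(k+1)) * (c - ((k:ℝ)+1)) * (2 * 2 ^ k)
          = (2 * 2 ^ k - 1) * (c - k - 1) := by
        rw [pow_succ, div_pow, one_pow]; field_simp; ring
      rw [e3] at h2'
      rw [show (1 - (1/2:ℝ)^k) * (c - (k:ℝ)) * (2 * 2 ^ k)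
          = (2 * 2 ^ k - 2) * (c - k) by rw [div_pow, one_pow]; field_simp] at h2'
      have : (2:ℝ) ^ (k+1) = 2 * 2 ^ k := by ring
      rw [this]
      nlinarith [h2']
  have hc0 : (0:ℝ) < c := by linarith
  constructor
  · have hlog : Real.logb 2 c < Real.logb 2 (2 ^ (mstar + 2)) :=
      Real.logb_lt_logb (by norm_num) hc0 hclt
    rw [Real.logb_pow, Real.logb_self_eq_one (by norm_num)] at hlog
    push_cast at hlog
    linarith
  · have hlog : Real.logb 2 ((2:ℝ) ^ mstar) ≤ Real.logb 2 (2 * c) :=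
      Real.logb_le_logb_of_le (by norm_num) hap hcle
    rw [Real.logb_pow, Real.logb_self_eq_one (by norm_num),
      Real.logb_mul (by norm_num) (ne_of_gt hc0),
      Real.logb_self_eq_one (by norm_num)] at hlog
    linarith
end

section
/- If x ∈ (0,1) is a dyadic rational, then lim_{h→0} (T(x+h) - T(x))/(|h| log₂(1/|h|)) = 1, where T is the Takagi function. -/
open Filter Topology Set

noncomputable def tent (x : ℝ) : ℝ := min (2*x) (2-2*x)

noncomputable def takagi (x : ℝ) : ℝ := ∑' n : ℕ, tent^[n+1] x / 2^(n+1)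

lemma tent_le (u : ℝ) (hu : u ≤ 1/2) : tent u = 2*u := min_eq_left (by linarith)

lemma tent_ge (u : ℝ) (hu : 1/2 ≤ u) : tent u = 2-2*u := min_eq_right (by linarith)

lemma tent_lip (a b : ℝ) : |tent a - tent b| ≤ 2 * |a - b| := by
  unfold tent
  refine (abs_min_sub_min_le_max _ _ _ _).trans ?_
  have h1 : ∀ c d : ℝ, |2*c - 2*d| = 2 * |c-d| := by
    intro c d
    rw [show 2*c - 2*d = 2*(c-d) by ring, abs_mul, abs_two]
  rw [h1, show (2:ℝ)-2*a - (2-2*b) = -(2*a-2*b) by ring, abs_neg, h1]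
  simp

lemma tent_iter_lip (n : ℕ) (a b : ℝ) : |tent^[n] a - tent^[n] b| ≤ 2^n * |a - b| := by
  induction n with
  | zero => simp
  | succ n ih =>
    rw [Function.iterate_succ_apply', Function.iterate_succ_apply']
    calc |tent (tent^[n] a) - tent (tent^[n] b)| ≤ 2 * |tent^[n] a - tent^[n] b| := tent_lip _ _
    _ ≤ 2 * (2^n * |a-b|) := by linarith
    _ = 2^(n+1) * |a-b| := by ring

lemma tent_mem (y : ℝ) (hy : y ∈ Icc (0:ℝ) 1) : tent y ∈ Icc (0:ℝ) 1 := by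
  obtain ⟨h0, h1⟩ := hy
  constructor
  · exact le_min (by linarith) (by linarith)
  · rcases le_total y (1/2) with h | h
    · rw [tent_le y h]; linarith
    · rw [tent_ge y h]; linarith

lemma tent_iter_mem (n : ℕ) (y : ℝ) (hy : y ∈ Icc (0:ℝ) 1) : tent^[n] y ∈ Icc (0:ℝ) 1 := by
  induction n with
  | zero => simpa
  | succ n ih => rw [Function.iterate_succ_apply']; exact tent_mem _ ih

lemma tent_iter_small (j : ℕ) (u : ℝ) (h0 : 0 ≤ u) (h1 : 2^j * u ≤ 1) : tent^[j] u = 2^j * u := by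
  induction j generalizing u with
  | zero => simp
  | succ j ih =>
    have h2 : (2:ℝ) ≤ 2^(j+1) := by
      calc (2:ℝ) = 2^1 := (pow_one 2).symm
      _ ≤ 2^(j+1) := pow_le_pow_right₀ (by norm_num) (by omega)
    have hu2 : u ≤ 1/2 := by nlinarith
    rw [Function.iterate_succ_apply, tent_le u hu2,
      ih (2*u) (by linarith) (by rw [show (2:ℝ)^j*(2*u) = 2^(j+1)*u by ring]; exact h1)]
    ring

lemma dyadic_local : ∀ (m : ℕ) (k : ℤ) (x : ℝ), x = (k:ℝ)/2^m → x ∈ Ioo (0:ℝ) 1 →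
    ∃ M : ℕ, ∃ δ : ℝ, 1 ≤ M ∧ 0 < δ ∧ ∀ h : ℝ, |h| ≤ δ → tent^[M] (x+h) = 2^M * |h| := by
  intro m
  induction m with
  | zero =>
    intro k x hk ⟨h0, h1⟩
    exfalso
    rw [hk] at h0 h1
    simp at h0 h1
    have : (1:ℤ) ≤ k := by exact_mod_cast h0
    have : (k:ℝ) ≥ 1 := by exact_mod_cast this
    linarith
  | succ m ih =>
    intro k x hk ⟨h0, h1⟩
    rcases lt_trichotomy x (1/2) with hlt | heq | hgt
    · obtain ⟨M, δ, hM, hδ, hloc⟩ := ih k (2*x)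
        (by rw [hk]; rw [pow_succ]; field_simp)
        ⟨by linarith, by linarith⟩
      refine ⟨M+1, min (δ/2) (1/2 - x), by omega, lt_min (by linarith) (by linarith), fun h hh => ?_⟩
      have hh1 : |h| ≤ δ/2 := hh.trans (min_le_left _ _)
      have hh2 : |h| ≤ 1/2 - x := hh.trans (min_le_right _ _)
      have : x + h ≤ 1/2 := by have := le_abs_self h; linarith
      rw [Function.iterate_succ_apply, tent_le _ this,
        show 2*(x+h) = 2*x + 2*h by ring, hloc (2*h) (by rw [abs_mul, abs_two]; linarith),
        abs_mul, abs_two, pow_succ]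
      ring
    · refine ⟨2, 1/4, by norm_num, by norm_num, fun h hh => ?_⟩
      have h1 : tent (x + h) = 1 - 2*|h| := by
        rcases le_total h 0 with hneg | hpos
        · rw [tent_le _ (by linarith), abs_of_nonpos hneg, heq]; ring
        · rw [tent_ge _ (by linarith), abs_of_nonneg hpos, heq]; ring
      have habs : 0 ≤ |h| := abs_nonneg h
      rw [show (2:ℕ) = 1 + 1 from rfl, Function.iterate_succ_apply, Function.iterate_one, h1,
        tent_ge _ (by linarith)]
      ring
    · obtain ⟨M, δ, hM, hδ, hloc⟩ := ih (2^(m+1) - k) (2 - 2*x)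
        (by rw [hk]; push_cast; rw [pow_succ]; field_simp)
        ⟨by linarith, by linarith⟩
      refine ⟨M+1, min (δ/2) (x - 1/2), by omega, lt_min (by linarith) (by linarith), fun h hh => ?_⟩
      have hh1 : |h| ≤ δ/2 := hh.trans (min_le_left _ _)
      have hh2 : |h| ≤ x - 1/2 := hh.trans (min_le_right _ _)
      have : 1/2 ≤ x + h := by have := neg_abs_le h; linarith
      rw [Function.iterate_succ_apply, tent_ge _ this,
        show 2-2*(x+h) = (2 - 2*x) + (-2*h) by ring,
        hloc (-2*h) (by rw [show (-2*h:ℝ) = -(2*h) by ring, abs_neg, abs_mul, abs_two]; linarith),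
        pow_succ, show (-2*h:ℝ) = -(2*h) by ring, abs_neg, abs_mul, abs_two]
      ring

lemma takagi_term_summable {y : ℝ} (hy : y ∈ Icc (0:ℝ) 1) :
    Summable (fun n : ℕ => tent^[n+1] y / 2^(n+1)) := by
  refine Summable.of_nonneg_of_le (f := fun n : ℕ => (1/2:ℝ)^(n+1)) ?_ ?_ ?_
  · intro n
    have := (tent_iter_mem (n+1) y hy).1
    positivity
  · intro n
    have h1 := (tent_iter_mem (n+1) y hy).2
    show tent^[n+1] y / 2^(n+1) ≤ (1/2:ℝ)^(n+1)
    rw [show ((1:ℝ)/2)^(n+1) = 1/2^(n+1) by rw [div_pow, one_pow]]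
    gcongr
  · exact (summable_nat_add_iff 1).mpr (summable_geometric_of_lt_one (by norm_num) (by norm_num))

theorem takagi_modulus_dyadic (x : ℝ) (hx : x ∈ Set.Ioo (0:ℝ) 1)
    (hdy : ∃ k : ℤ, ∃ m : ℕ, x = (k : ℝ) / 2^m) :
    Tendsto (fun h => (takagi (x + h) - takagi x) / (|h| * Real.logb 2 (1/|h|)))
      (𝓝[≠] (0:ℝ)) (𝓝 1) := by
  obtain ⟨k, m, hk⟩ := hdy
  obtain ⟨hx0, hx1⟩ := hx
  obtain ⟨M, δ, hM1, hδ, hloc⟩ := dyadic_local m k x hk ⟨hx0, hx1⟩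
  set δ₀ : ℝ := min δ (min ((2:ℝ)^(M+1))⁻¹ (min x (1-x))) with hδ₀def
  have hδ₀ : 0 < δ₀ :=
    lt_min hδ (lt_min (by positivity) (lt_min hx0 (by linarith)))
  have key : ∀ h : ℝ, h ≠ 0 → |h| ≤ δ₀ →
      abs ((takagi (x+h) - takagi x) - (Real.logb 2 (1/|h|)) * |h|) ≤ (2*M+1) * |h| := by
    intro h hne hsm
    have hhpos : 0 < |h| := abs_pos.mpr hne
    have hhδ : |h| ≤ δ := hsm.trans (min_le_left _ _)
    have hh2M : |h| ≤ ((2:ℝ)^(M+1))⁻¹ := hsm.trans ((min_le_right _ _).trans (min_le_left _ _))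
    have hhx : |h| ≤ x := hsm.trans ((min_le_right _ _).trans ((min_le_right _ _).trans (min_le_left _ _)))
    have hhx1 : |h| ≤ 1 - x := hsm.trans ((min_le_right _ _).trans ((min_le_right _ _).trans (min_le_right _ _)))
    have hy : x + h ∈ Icc (0:ℝ) 1 :=
      ⟨by have := neg_abs_le h; linarith, by have := le_abs_self h; linarith⟩
    have hxI : x ∈ Icc (0:ℝ) 1 := ⟨le_of_lt hx0, le_of_lt hx1⟩
    set L : ℝ := Real.logb 2 (1/|h|) with hLdef
    set K : ℕ := ⌊L⌋₊ with hKdef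
    have hinv : (0:ℝ) < 1/|h| := by positivity
    have h2L : (2:ℝ) ^ L = 1/|h| := Real.rpow_logb (by norm_num) (by norm_num) hinv
    have h2MH : (2:ℝ)^(M+1) ≤ 1/|h| := by
      rw [le_div_iff₀ hhpos]
      calc (2:ℝ)^(M+1) * |h| ≤ 2^(M+1) * ((2:ℝ)^(M+1))⁻¹ := by
            exact mul_le_mul_of_nonneg_left hh2M (by positivity)
      _ = 1 := by field_simp
    have hML : (M:ℝ) + 1 ≤ L := by
      calc (M:ℝ)+1 = Real.logb 2 ((2:ℝ)^(M+1)) := by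
            rw [Real.logb_pow, Real.logb_self_eq_one (by norm_num)]; push_cast; ring
      _ ≤ L := Real.logb_le_logb_of_le (by norm_num) (by positivity) h2MH
    have hLpos : 0 < L := by
      have : (0:ℝ) ≤ M := Nat.cast_nonneg M
      linarith
    have hKL : (K:ℝ) ≤ L := Nat.floor_le hLpos.le
    have hLK : L < (K:ℝ) + 1 := Nat.lt_floor_add_one L
    have hMK : M + 1 ≤ K := Nat.le_floor (by push_cast; exact hML)
    have h2K : (2:ℝ)^K * |h| ≤ 1 := by
      have h1 : ((2:ℝ)^K : ℝ) ≤ 2 ^ L := by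
        rw [← Real.rpow_natCast 2 K]
        exact Real.rpow_le_rpow_of_exponent_le one_le_two hKL
      rw [h2L] at h1
      calc (2:ℝ)^K * |h| ≤ (1/|h|) * |h| := mul_le_mul_of_nonneg_right h1 hhpos.le
      _ = 1 := by field_simp
    have hKtail : ((1:ℝ)/2)^K ≤ 2 * |h| := by
      have h1 : (2:ℝ) ^ L < 2^((K:ℝ)+1) := Real.rpow_lt_rpow_of_exponent_lt one_lt_two hLK
      rw [h2L] at h1
      have h2 : (2:ℝ)^((K:ℝ)+1) = 2^(K+1) := by
        rw [← Real.rpow_natCast 2 (K+1)]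
        push_cast
        ring_nf
      rw [h2] at h1
      have h3 : 1 < 2^(K+1) * |h| := by
        rw [div_lt_iff₀ hhpos] at h1
        linarith
      have h4 : (0:ℝ) < 2^K := by positivity
      rw [show ((1:ℝ)/2)^K = 1/2^K by rw [div_pow, one_pow], div_le_iff₀ h4]
      rw [pow_succ] at h3
      nlinarith
    have S1 := takagi_term_summable hy
    have S2 := takagi_term_summable hxI
    set d : ℕ → ℝ := fun n => tent^[n+1] (x+h) / 2^(n+1) - tent^[n+1] x / 2^(n+1) with hd
    have Sd : Summable d := S1.sub S2
    have hΔ : takagi (x+h) - takagi x = ∑' n, d n := (S1.tsum_sub S2).symm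
    have hsplit : ∑' n, d n = (∑ i ∈ Finset.range K, d i) + ∑' n, d (n + K) :=
      (Sd.sum_add_tsum_nat_add K).symm
    -- tail bound
    have hdb : ∀ n : ℕ, |d (n + K)| ≤ (1/2:ℝ)^(n+K+1) := by
      intro n
      have h1 := tent_iter_mem (n+K+1) (x+h) hy
      have h2 := tent_iter_mem (n+K+1) x hxI
      rw [hd]
      simp only
      rw [div_sub_div_same, abs_div, abs_of_pos (show (0:ℝ) < 2^(n+K+1) by positivity),
        show ((1:ℝ)/2)^(n+K+1) = 1/2^(n+K+1) by rw [div_pow, one_pow]]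
      gcongr
      rw [abs_sub_le_iff]
      constructor <;> [skip; skip] <;> obtain ⟨a1,a2⟩ := h1 <;> obtain ⟨b1,b2⟩ := h2 <;> linarith
    have Sg : Summable (fun n : ℕ => (1/2:ℝ)^(n+K+1)) :=
      (summable_nat_add_iff (K+1)).mpr (summable_geometric_of_lt_one (by norm_num) (by norm_num))
    have htsg : ∑' n : ℕ, (1/2:ℝ)^(n+K+1) = (1/2:ℝ)^K := by
      have : ∀ n : ℕ, (1/2:ℝ)^(n+K+1) = (1/2:ℝ)^n * (1/2)^(K+1) := by
        intro n; rw [show n+K+1 = n+(K+1) by omega, pow_add]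
      rw [tsum_congr this, tsum_mul_right, tsum_geometric_of_lt_one (by norm_num) (by norm_num),
        pow_succ]
      norm_num
      ring
    have htail : |∑' n, d (n + K)| ≤ (1/2:ℝ)^K := by
      have hs : Summable (fun n => |d (n + K)|) := by
        refine Summable.of_nonneg_of_le (fun n => abs_nonneg _) hdb Sg
      calc |∑' n, d (n + K)| ≤ ∑' n, |d (n + K)| := by
            simpa using norm_tsum_le_tsum_norm (f := fun n => d (n + K)) (by simpa using hs)
      _ ≤ ∑' n : ℕ, (1/2:ℝ)^(n+K+1) := Summable.tsum_le_tsum hdb hs Sg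
      _ = (1/2:ℝ)^K := htsg
    -- middle terms
    set P : ℕ := M - 1 with hP
    set Q : ℕ := K - P with hQ
    have hKPQ : K = P + Q := by omega
    have hrange : ∑ i ∈ Finset.range K, d i
        = (∑ i ∈ Finset.range P, d i) + ∑ i ∈ Finset.range Q, d (P + i) := by
      conv_lhs => rw [hKPQ]
      exact Finset.sum_range_add d P Q
    have hMx : tent^[M] (x + h) = 2^M * |h| := hloc h hhδ
    have hMx0 : tent^[M] x = 0 := by
      have h0 := hloc 0 (by simpa using hδ.le)
      simpa using h0
    have hmid : ∀ i ∈ Finset.range Q, d (P + i) = |h| := by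
      intro i hi
      rw [Finset.mem_range] at hi
      have hiK : i + M ≤ K := by omega
      have hidx : P + i + 1 = i + M := by omega
      have hexp : (2:ℝ)^i * (2^M * |h|) ≤ 1 := by
        calc (2:ℝ)^i * (2^M * |h|) = 2^(i+M) * |h| := by rw [pow_add]; ring
        _ ≤ 2^K * |h| := by
              have : (2:ℝ)^(i+M) ≤ 2^K := pow_le_pow_right₀ (by norm_num) hiK
              exact mul_le_mul_of_nonneg_right this hhpos.le
        _ ≤ 1 := h2K
      rw [hd]
      simp only
      rw [hidx, Function.iterate_add_apply, Function.iterate_add_apply, hMx, hMx0,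
        tent_iter_small i _ (by positivity) hexp,
        tent_iter_small i 0 le_rfl (by simp)]
      rw [pow_add]
      field_simp
      ring
    have hmidsum : ∑ i ∈ Finset.range Q, d (P + i) = (Q:ℝ) * |h| := by
      rw [Finset.sum_congr rfl hmid, Finset.sum_const, Finset.card_range, nsmul_eq_mul]
    -- head bound
    have hhead : |∑ i ∈ Finset.range P, d i| ≤ (P:ℝ) * |h| := by
      refine (Finset.abs_sum_le_sum_abs _ _).trans ?_
      calc ∑ i ∈ Finset.range P, |d i| ≤ ∑ _i ∈ Finset.range P, |h| := by
            refine Finset.sum_le_sum fun i _ => ?_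
            rw [hd]
            simp only
            rw [div_sub_div_same, abs_div, abs_of_pos (show (0:ℝ) < 2^(i+1) by positivity),
              div_le_iff₀ (show (0:ℝ) < 2^(i+1) by positivity)]
            calc |tent^[i+1] (x+h) - tent^[i+1] x| ≤ 2^(i+1) * |x + h - x| := tent_iter_lip _ _ _
            _ = |h| * 2^(i+1) := by rw [show x + h - x = h by ring]; ring
      _ = (P:ℝ) * |h| := by rw [Finset.sum_const, Finset.card_range, nsmul_eq_mul]
    -- assemble
    have hQcast : (Q:ℝ) = (K:ℝ) - (M:ℝ) + 1 := by
      have : Q = K - M + 1 := by omega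
      rw [this]
      push_cast [Nat.cast_sub (by omega : M ≤ K)]
      ring
    have hQL : |(Q:ℝ) - L| ≤ (M:ℝ) := by
      rw [abs_le]
      have hM1R : (1:ℝ) ≤ M := by exact_mod_cast hM1
      constructor <;> rw [hQcast] <;> linarith
    have hPcast : (P:ℝ) = (M:ℝ) - 1 := by
      push_cast [Nat.cast_sub (by omega : 1 ≤ M)]
      simp [hP, Nat.cast_sub (show 1 ≤ M by omega)]
    have heq1 : takagi (x+h) - takagi x - L * |h|
        = (∑ i ∈ Finset.range P, d i) + ((Q:ℝ) - L) * |h| + ∑' n, d (n + K) := by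
      rw [hΔ, hsplit, hrange, hmidsum]
      ring
    rw [heq1]
    calc abs ((∑ i ∈ Finset.range P, d i) + ((Q:ℝ) - L) * |h| + ∑' n, d (n + K))
        ≤ |∑ i ∈ Finset.range P, d i| + abs (((Q:ℝ) - L) * |h|) + |∑' n, d (n + K)| :=
          abs_add_three _ _ _
      _ ≤ (P:ℝ) * |h| + (M:ℝ) * |h| + 2 * |h| := by
          refine add_le_add (add_le_add hhead ?_) (htail.trans hKtail)
          rw [abs_mul, abs_abs]
          exact mul_le_mul_of_nonneg_right hQL hhpos.le
      _ = (2*M+1) * |h| := by rw [hPcast]; ring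
  -- conclude from key by squeeze
  have hLtop : Tendsto (fun h : ℝ => Real.logb 2 (1/|h|)) (𝓝[≠] 0) atTop := by
    have h1 : Tendsto (fun h : ℝ => |h|) (𝓝[≠] (0:ℝ)) (𝓝[>] 0) := by
      rw [tendsto_nhdsWithin_iff]
      constructor
      · have := (continuous_abs.tendsto (0:ℝ)).mono_left (nhdsWithin_le_nhds (s := {(0:ℝ)}ᶜ))
        simpa using this
      · filter_upwards [self_mem_nhdsWithin] with h hh
        exact abs_pos.mpr hh
    have h2 := tendsto_inv_nhdsGT_zero.comp h1
    have h3 := (Real.tendsto_logb_atTop one_lt_two).comp h2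
    refine h3.congr fun h => by simp [Function.comp, one_div]
  have hsub : Tendsto (fun h : ℝ => (takagi (x+h) - takagi x)/(|h| * Real.logb 2 (1/|h|)) - 1)
      (𝓝[≠] 0) (𝓝 0) := by
    apply squeeze_zero_norm' (a := fun h : ℝ => (2*(M:ℝ)+1)/Real.logb 2 (1/|h|))
    · have hev : ∀ᶠ h : ℝ in 𝓝[≠] (0:ℝ), |h| ≤ δ₀ := by
        have : ∀ᶠ h : ℝ in 𝓝 (0:ℝ), |h| ≤ δ₀ := by
          filter_upwards [Metric.ball_mem_nhds (0:ℝ) hδ₀] with h hh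
          rw [Metric.mem_ball, Real.dist_eq, sub_zero] at hh
          exact hh.le
        exact this.filter_mono nhdsWithin_le_nhds
      filter_upwards [hev, self_mem_nhdsWithin] with h hsm hne
      have hne' : h ≠ 0 := hne
      have hhpos : 0 < |h| := abs_pos.mpr hne'
      have hh2M : |h| ≤ ((2:ℝ)^(M+1))⁻¹ := hsm.trans ((min_le_right _ _).trans (min_le_left _ _))
      set L : ℝ := Real.logb 2 (1/|h|) with hLdef
      have h2MH : (2:ℝ)^(M+1) ≤ 1/|h| := by
        rw [le_div_iff₀ hhpos]
        calc (2:ℝ)^(M+1) * |h| ≤ 2^(M+1) * ((2:ℝ)^(M+1))⁻¹ :=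
              mul_le_mul_of_nonneg_left hh2M (by positivity)
        _ = 1 := by field_simp
      have hML : (M:ℝ) + 1 ≤ L := by
        calc (M:ℝ)+1 = Real.logb 2 ((2:ℝ)^(M+1)) := by
              rw [Real.logb_pow, Real.logb_self_eq_one (by norm_num)]; push_cast; ring
        _ ≤ L := Real.logb_le_logb_of_le (by norm_num) (by positivity) h2MH
      have hLpos : 0 < L := by
        have : (0:ℝ) ≤ M := Nat.cast_nonneg M
        linarith
      have hden : |h| * L ≠ 0 := by positivity
      rw [Real.norm_eq_abs, div_sub_one hden, abs_div, abs_of_pos (by positivity : (0:ℝ) < |h| * L)]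
      have hnum : abs ((takagi (x+h) - takagi x) - |h| * L) ≤ (2*(M:ℝ)+1) * |h| := by
        have := key h hne' hsm
        rw [show |h| * L = L * |h| by ring]
        exact this
      calc abs ((takagi (x+h) - takagi x) - |h| * L) / (|h| * L)
          ≤ ((2*(M:ℝ)+1) * |h|) / (|h| * L) := by
            gcongr
        _ = (2*(M:ℝ)+1)/L := by
            rw [mul_comm |h| L]
            rw [mul_div_mul_right _ _ (ne_of_gt hhpos)]
    · exact Tendsto.const_div_atTop hLtop _
  have := hsub.add (tendsto_const_nhds (x := (1:ℝ)) (f := 𝓝[≠] (0:ℝ)))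
  simpa using this
end
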